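/- arXiv:2406.00150 — 2 statements merged into one kernel-verified Lean document; each statement's English description precedes it below -/
import Mathlib

section
/- Let f : ℝⁿ → ℝ be convex, differentiable, and coordinatewise L-smooth for some L ∈ ℝⁿ with all entries Lᵢ > 0, let η ∈ ℝⁿ satisfy 0 < ηᵢ ≤ 1/Lᵢ for every coordinate i, let θ* be a global minimizer of f, and let θ(t) be the coordinatewise gradient-descent iterates with learning-rate vector η. Then for every T ≥ 1, the telescoping bound Σ_{t=0}^{T−1} ( f(θ(t+1)) − f(θ*) ) ≤ (1/2) Σᵢ (1/ηᵢ)(θᵢ(0) − θ*ᵢ)² holds. -/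
open Finset

/-- The `i`-th partial derivative of `f : ℝⁿ → ℝ` at `x`. -/
noncomputable def pderiv' {n : ℕ} (f : (Fin n → ℝ) → ℝ) (i : Fin n) (x : Fin n → ℝ) : ℝ :=
  fderiv ℝ f x (Pi.single i 1)

/-- The fderiv applied to `v` equals the sum of partials times components. -/
lemma sum_pderiv {n : ℕ} (f : (Fin n → ℝ) → ℝ) (x v : Fin n → ℝ) :
    ∑ i, pderiv' f i x * v i = fderiv ℝ f x v := by
  have hv : (∑ i, v i • (Pi.single i (1 : ℝ) : Fin n → ℝ)) = v := by
    funext j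
    simp [Finset.sum_apply, Pi.single_apply]
  conv_rhs => rw [← hv]
  rw [map_sum]
  simp [pderiv', mul_comm]

/-- Gradient inequality for convex differentiable functions. -/
lemma convex_grad_ineq {n : ℕ} (f : (Fin n → ℝ) → ℝ)
    (hconv : ConvexOn ℝ Set.univ f) (hdiff : Differentiable ℝ f)
    (x y : Fin n → ℝ) : f x + fderiv ℝ f x (y - x) ≤ f y := by
  set φ : ℝ → ℝ := fun t => f (x + t • (y - x)) with hφ
  have hφc : ConvexOn ℝ Set.univ φ := by
    have := hconv.comp_affineMap (AffineMap.lineMap x y)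
    have he : φ = f ∘ (AffineMap.lineMap x y) := by
      funext t
      simp only [hφ, Function.comp, AffineMap.lineMap_apply, vsub_eq_sub, vadd_eq_add]
      rw [add_comm]
    rw [he]
    simpa using this
  have hder : HasDerivAt φ (fderiv ℝ f x (y - x)) 0 := by
    have hinner : HasDerivAt (fun t : ℝ => x + t • (y - x)) (y - x) 0 := by
      simpa using ((hasDerivAt_id (0:ℝ)).smul_const (y - x)).const_add x
    have := (hdiff (x + (0:ℝ) • (y - x))).hasFDerivAt.comp_hasDerivAt 0 hinner
    simp only [zero_smul, add_zero] at this
    exact this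
  have hs := hφc.le_slope_of_hasDerivAt (Set.mem_univ (0:ℝ)) (Set.mem_univ (1:ℝ))
    one_pos hder
  have : slope φ 0 1 = f y - f x := by
    simp [slope, φ]
  rw [this] at hs
  linarith

/-- Telescoping bound for coordinatewise gradient descent on a convex, differentiable,
coordinatewise `L`-smooth function `f` with learning rates `0 < ηᵢ ≤ 1/Lᵢ` and global
minimizer `θ*`:
`Σ_{t=0}^{T−1} (f(θ(t+1)) − f(θ*)) ≤ (1/2) Σᵢ (1/ηᵢ)(θᵢ(0) − θ*ᵢ)²`. -/
theorem mtsl_telescope {n : ℕ} (f : (Fin n → ℝ) → ℝ) (L η : Fin n → ℝ)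
    (hconv : ConvexOn ℝ Set.univ f)
    (hdiff : Differentiable ℝ f)
    (hL : ∀ i, 0 < L i)
    (hsmooth : ∀ x y : Fin n → ℝ,
      f y ≤ f x + (∑ i, pderiv' f i x * (y i - x i)) + (1 / 2) * ∑ i, L i * (y i - x i) ^ 2)
    (hη : ∀ i, 0 < η i) (hηL : ∀ i, η i ≤ 1 / L i)
    (θs : Fin n → ℝ) (hmin : ∀ x, f θs ≤ f x)
    (θ : ℕ → Fin n → ℝ)
    (hiter : ∀ t, θ (t + 1) = fun i => θ t i - η i * pderiv' f i (θ t))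
    (T : ℕ) (hT : 1 ≤ T) :
    ∑ t ∈ Finset.range T, (f (θ (t + 1)) - f θs) ≤
      (1 / 2) * ∑ i, (1 / η i) * (θ 0 i - θs i) ^ 2 := by
  set A : ℕ → ℝ := fun t => (1 / 2) * ∑ i, (1 / η i) * (θ t i - θs i) ^ 2 with hA
  have key : ∀ t, f (θ (t + 1)) - f θs ≤ A t - A (t + 1) := by
    intro t
    set g : Fin n → ℝ := fun i => pderiv' f i (θ t) with hg
    -- descent step
    have h1 := hsmooth (θ t) (θ (t + 1))
    have hstep : ∀ i, θ (t + 1) i - θ t i = -(η i * g i) := by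
      intro i; rw [hiter t]; ring
    -- convexity step
    have h2 : f (θ t) - f θs ≤ ∑ i, g i * (θ t i - θs i) := by
      have := convex_grad_ineq f hconv hdiff (θ t) θs
      rw [← sum_pderiv f (θ t) (θs - θ t)] at this
      have hsum : ∑ i, pderiv' f i (θ t) * (θs - θ t) i
          = -∑ i, g i * (θ t i - θs i) := by
        rw [← Finset.sum_neg_distrib]
        apply Finset.sum_congr rfl
        intro i _
        simp [hg]; ring
      rw [hsum] at this
      linarith
    -- combine
    have hLη : ∀ i, L i * η i ≤ 1 := by
      intro i
      have := hηL i
      have hLi := hL i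
      rw [le_div_iff₀ hLi] at this
      linarith [this]
    have h3 : ∑ i, L i * (θ (t + 1) i - θ t i) ^ 2 ≤ ∑ i, η i * g i ^ 2 := by
      apply Finset.sum_le_sum
      intro i _
      rw [hstep i]
      have h4 : L i * (-(η i * g i)) ^ 2 = (L i * η i) * (η i * g i ^ 2) := by ring
      rw [h4]
      have hnn : 0 ≤ η i * g i ^ 2 := mul_nonneg (hη i).le (sq_nonneg _)
      nlinarith [hLη i, hnn]
    have h5 : ∑ i, pderiv' f i (θ t) * (θ (t + 1) i - θ t i) = -∑ i, η i * g i ^ 2 := by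
      rw [← Finset.sum_neg_distrib]
      apply Finset.sum_congr rfl
      intro i _
      rw [hstep i]
      simp [hg]; ring
    have hAdiff : A t - A (t + 1)
        = ∑ i, (g i * (θ t i - θs i) - (η i / 2) * g i ^ 2) := by
      simp only [hA]
      rw [← mul_sub, ← Finset.sum_sub_distrib, Finset.mul_sum]
      apply Finset.sum_congr rfl
      intro i _
      have hθ : θ (t + 1) i = θ t i - η i * g i := by rw [hiter t]
      rw [hθ]
      have hηi := (hη i).ne'
      field_simp
      ring
    rw [hAdiff]
    have hsplit : ∑ i, (g i * (θ t i - θs i) - (η i / 2) * g i ^ 2)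
        = (∑ i, g i * (θ t i - θs i)) - (1/2) * ∑ i, η i * g i ^ 2 := by
      rw [Finset.mul_sum, ← Finset.sum_sub_distrib]
      apply Finset.sum_congr rfl
      intro i _; ring
    rw [hsplit]
    rw [h5] at h1
    linarith
  calc ∑ t ∈ Finset.range T, (f (θ (t + 1)) - f θs)
      ≤ ∑ t ∈ Finset.range T, (A t - A (t + 1)) := Finset.sum_le_sum fun t _ => key t
    _ = A 0 - A T := Finset.sum_range_sub' A T
    _ ≤ A 0 := by
        have : 0 ≤ A T := by
          rw [hA]
          have : 0 ≤ ∑ i, (1 / η i) * (θ T i - θs i) ^ 2 :=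
            Finset.sum_nonneg fun i _ =>
              mul_nonneg (div_nonneg zero_le_one (hη i).le) (sq_nonneg _)
          linarith
        linarith
    _ = (1 / 2) * ∑ i, (1 / η i) * (θ 0 i - θs i) ^ 2 := rfl
end

section
/- (Proposition 2, convex case.) Let f : ℝⁿ → ℝ be convex and differentiable, let θ* ∈ ℝⁿ be a global minimizer of f, and let θ(t), t = 0, …, T, be generated by the stochastic MTSL iteration from a deterministic initial point θ(0), satisfying for every t ∈ {0,…,T−1}: unbiasedness E[g̃(t) | ℱ_t] = ∇f(θ(t)) almost surely; second-moment bound E[‖g̃(t)‖²] ≤ G²; and the alignment condition that almost surely ∂ᵢf(θ(t)) · (θᵢ(t) − θ*ᵢ) ≥ 0 for every coordinate i. Assume f(θ(t)) and ‖θ(t) − θ*‖² are integrable for all t. Then min_{0 ≤ t ≤ T−1} E[ f(θ(t)) − f(θ*) ] ≤ ( ‖θ(0) − θ*‖² + G² Σ_{t=0}^{T−1} η_max(t)² ) / ( 2 Σ_{t=0}^{T−1} η_min(t) ). -/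
open MeasureTheory Finset

/- Auxiliary lemmas -/

theorem mtsl_aux_integrable_mul {Ω : Type*} {m0 : MeasurableSpace Ω} {μ : Measure Ω}
    {f g : Ω → ℝ} (hf : MemLp f 2 μ) (hg : MemLp g 2 μ) :
    Integrable (fun ω => f ω * g ω) μ := by
  refine Integrable.mono' ((hf.integrable_sq.add hg.integrable_sq).div_const 2) (hf.1.mul hg.1) ?_
  filter_upwards with ω
  simp only [Pi.add_apply, norm_mul, Real.norm_eq_abs]
  nlinarith [sq_nonneg (|f ω| - |g ω|), sq_abs (f ω), sq_abs (g ω)]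

theorem mtsl_aux_clm_sum {n : ℕ} (L : (Fin n → ℝ) →L[ℝ] ℝ) (v : Fin n → ℝ) :
    L v = ∑ i, v i * L (Pi.single i 1) := by
  have hv : v = ∑ i, v i • (Pi.single i 1 : Fin n → ℝ) := by
    ext j
    rw [Finset.sum_apply]
    simp [Pi.single_apply]
  conv_lhs => rw [hv]
  rw [map_sum]
  simp [smul_eq_mul]

theorem mtsl_aux_grad_le {n : ℕ} {f : (Fin n → ℝ) → ℝ} (hconv : ConvexOn ℝ Set.univ f)
    (hdiff : Differentiable ℝ f) (x y : Fin n → ℝ) :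
    f x + fderiv ℝ f x (y - x) ≤ f y := by
  rcases eq_or_ne x y with rfl | hxy
  · simp
  · set g : ℝ → ℝ := fun t => f (t • (y - x) + x) with hg
    have hgconv : ConvexOn ℝ Set.univ g := by
      have := hconv.comp_affineMap
        ((LinearMap.toAffineMap (LinearMap.toSpanSingleton ℝ _ (y - x))) + AffineMap.const ℝ ℝ x)
      simpa [Function.comp_def, g] using this
    have hline : HasDerivAt (fun t : ℝ => t • (y - x) + x) (y - x) 0 := by
      simpa using ((hasDerivAt_id (0:ℝ)).smul_const (y - x)).add_const x
    have hgd : HasDerivAt g (fderiv ℝ f x (y - x)) 0 := by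
      have h0 : ((0:ℝ) • (y - x) + x) = x := by simp
      have := (hdiff ((0:ℝ) • (y - x) + x)).hasFDerivAt.comp_hasDerivAt 0 hline
      simpa [h0, g, Function.comp_def] using this
    have := hgconv.le_slope_of_hasDerivAt (Set.mem_univ (0:ℝ)) (Set.mem_univ (1:ℝ)) one_pos hgd
    rw [slope_def_field] at this
    have hg1 : g 1 = f y := by simp [g]
    have hg0 : g 0 = f x := by simp [g]
    rw [hg1, hg0] at this
    simp only [div_one, sub_zero] at this
    linarith

theorem mtsl_aux_condexp_pi_apply {n : ℕ} {Ω : Type*} {m m0 : MeasurableSpace Ω} {μ : Measure Ω}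
    [IsFiniteMeasure μ]
    (hm : m ≤ m0) (g : Ω → Fin n → ℝ) (hg : Integrable g μ) (i : Fin n) :
    (fun ω => (μ[g|m]) ω i) =ᵐ[μ] μ[fun ω => g ω i|m] := by
  haveI : SigmaFinite (μ.trim hm) := by infer_instance
  set L := ContinuousLinearMap.proj (R := ℝ) (φ := fun _ : Fin n => ℝ) i with hL
  have hce : Integrable (μ[g|m]) μ := integrable_condExp
  have hceL : Integrable (fun ω => L ((μ[g|m]) ω)) μ := L.integrable_comp hce
  refine ae_eq_condExp_of_forall_setIntegral_eq hm (L.integrable_comp hg)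
    (fun s hs hμs => hceL.integrableOn)
    (fun s hs hμs => ?_)
    ((continuous_apply i).comp_stronglyMeasurable (stronglyMeasurable_condExp (m := m) (μ := μ) (f := g))).aestronglyMeasurable
  calc ∫ ω in s, (μ[g|m]) ω i ∂μ
      = L (∫ ω in s, (μ[g|m]) ω ∂μ) := by
        exact ContinuousLinearMap.integral_comp_comm L hce.integrableOn
    _ = L (∫ ω in s, g ω ∂μ) := by rw [setIntegral_condExp hm hg hs]
    _ = ∫ ω in s, g ω i ∂μ := by
        exact (ContinuousLinearMap.integral_comp_comm L hg.integrableOn).symm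

/-- Proposition 2 (convex case): for the stochastic MTSL iteration
`θ(t+1) = θ(t) − η(t) ⊙ g̃(t)` on a convex differentiable `f` with global minimizer `θ*`,
deterministic initial point, unbiased gradient estimates, second-moment bound
`E‖g̃(t)‖² ≤ G²`, and the coordinatewise alignment condition, the best iterate satisfies
`min_{0 ≤ t ≤ T−1} E[f(θ(t)) − f(θ*)]
  ≤ (‖θ(0) − θ*‖² + G² Σ_{t<T} η_max(t)²) / (2 Σ_{t<T} η_min(t))`. -/
theorem mtsl_sgd_convex_rate {n : ℕ} [NeZero n] {Ω : Type*} {m0 : MeasurableSpace Ω}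
    (μ : Measure Ω) [IsProbabilityMeasure μ]
    (𝓕 : Filtration ℕ m0)
    (f : (Fin n → ℝ) → ℝ)
    (hconv : ConvexOn ℝ Set.univ f) (hdiff : Differentiable ℝ f)
    (θs : Fin n → ℝ) (hmin : ∀ x, f θs ≤ f x)
    (η : ℕ → Fin n → ℝ) (hη : ∀ t i, 0 < η t i)
    (G : ℝ) (T : ℕ) (hT : 1 ≤ T)
    (θ : ℕ → Ω → Fin n → ℝ) (gt : ℕ → Ω → Fin n → ℝ)
    (θinit : Fin n → ℝ) (hθ0 : ∀ ω, θ 0 ω = θinit)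
    (hadapted : Adapted 𝓕 θ)
    (hupdate : ∀ t ω, θ (t + 1) ω = fun i => θ t ω i - η t i * gt t ω i)
    (hgt2 : ∀ t, MemLp (gt t) 2 μ)
    (hunbiased : ∀ t < T, μ[gt t | 𝓕 t] =ᵐ[μ] fun ω => fun i => pderiv' f i (θ t ω))
    (hG : ∀ t < T, ∫ ω, ∑ i, (gt t ω i) ^ 2 ∂μ ≤ G ^ 2)
    (halign : ∀ t < T, ∀ᵐ ω ∂μ, ∀ i, 0 ≤ pderiv' f i (θ t ω) * (θ t ω i - θs i))
    (hfint : ∀ t, Integrable (fun ω => f (θ t ω)) μ)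
    (hθint : ∀ t, Integrable (fun ω => ∑ i, (θ t ω i - θs i) ^ 2) μ) :
    (Finset.range T).inf' (Finset.nonempty_range_iff.mpr (by omega))
        (fun t => ∫ ω, (f (θ t ω) - f θs) ∂μ) ≤
      ((∑ i, (θinit i - θs i) ^ 2)
          + G ^ 2 * ∑ t ∈ Finset.range T, (Finset.univ.sup' Finset.univ_nonempty (η t)) ^ 2)
        / (2 * ∑ t ∈ Finset.range T, Finset.univ.inf' Finset.univ_nonempty (η t)) := by
  -- notation
  set ηmin : ℕ → ℝ := fun t => Finset.univ.inf' Finset.univ_nonempty (η t) with hηmin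
  set ηmax : ℕ → ℝ := fun t => Finset.univ.sup' Finset.univ_nonempty (η t) with hηmax
  set D : ℕ → ℝ := fun t => ∫ ω, ∑ i, (θ t ω i - θs i) ^ 2 ∂μ with hD
  set F : ℕ → ℝ := fun t => ∫ ω, (f (θ t ω) - f θs) ∂μ with hF
  have hηmin_pos : ∀ t, 0 < ηmin t := fun t => (Finset.lt_inf'_iff _).mpr fun i _ => hη t i
  have hηmin_le : ∀ t i, ηmin t ≤ η t i := fun t i => Finset.inf'_le _ (Finset.mem_univ i)
  have hηmax_le : ∀ t i, η t i ≤ ηmax t := fun t i => Finset.le_sup' _ (Finset.mem_univ i)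
  -- basic measurability / integrability
  have hθmeas : ∀ t, StronglyMeasurable (θ t) := fun t => ((hadapted t).mono (𝓕.le t) le_rfl).stronglyMeasurable
  have hXm : ∀ t i, StronglyMeasurable[𝓕 t] (fun ω => θ t ω i - θs i) := fun t i =>
    ((continuous_apply i).comp_stronglyMeasurable (hadapted t).stronglyMeasurable).sub stronglyMeasurable_const
  have hXm0 : ∀ t i, StronglyMeasurable (fun ω => θ t ω i - θs i) := fun t i =>
    (hXm t i).mono (𝓕.le t)
  have hX2 : ∀ t i, MemLp (fun ω => θ t ω i - θs i) 2 μ := by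
    intro t i
    refine (memLp_two_iff_integrable_sq (hXm0 t i).aestronglyMeasurable).mpr ?_
    refine Integrable.mono' (hθint t) ((hXm0 t i).pow 2).aestronglyMeasurable ?_
    filter_upwards with ω
    rw [Real.norm_eq_abs, abs_of_nonneg (sq_nonneg _)]
    exact Finset.single_le_sum (f := fun j => (θ t ω j - θs j) ^ 2)
      (fun j _ => sq_nonneg _) (Finset.mem_univ i)
  have hg2i : ∀ t i, MemLp (fun ω => gt t ω i) 2 μ := fun t i =>
    (ContinuousLinearMap.proj (R := ℝ) (φ := fun _ : Fin n => ℝ) i).comp_memLp' (hgt2 t)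
  have hgsq_int : ∀ t i, Integrable (fun ω => gt t ω i ^ 2) μ := fun t i =>
    (hg2i t i).integrable_sq
  have hXg_int : ∀ t i, Integrable (fun ω => (θ t ω i - θs i) * gt t ω i) μ := fun t i =>
    mtsl_aux_integrable_mul (hX2 t i) (hg2i t i)
  have hgt_int : ∀ t, Integrable (gt t) μ := fun t => (hgt2 t).integrable one_le_two
  have hfs_int : ∀ t, Integrable (fun ω => f (θ t ω) - f θs) μ := fun t =>
    (hfint t).sub (integrable_const _)
  -- cross term: conditional expectation step
  have hcross : ∀ t, t < T → ∀ i : Fin n,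
      Integrable (fun ω => (θ t ω i - θs i) * pderiv' f i (θ t ω)) μ ∧
      (∫ ω, (θ t ω i - θs i) * gt t ω i ∂μ)
        = ∫ ω, (θ t ω i - θs i) * pderiv' f i (θ t ω) ∂μ := by
    intro t ht i
    haveI : SigmaFinite (μ.trim (𝓕.le t)) := by infer_instance
    set XG : Ω → ℝ := (fun ω => θ t ω i - θs i) * (fun ω => gt t ω i) with hXG
    have hgi : Integrable (fun ω => gt t ω i) μ := (hg2i t i).integrable one_le_two
    have hmul := condExp_mul_of_stronglyMeasurable_left (μ := μ) (hXm t i) (hXg_int t i) hgi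
    have hcomp : μ[fun ω => gt t ω i|𝓕 t] =ᵐ[μ] fun ω => pderiv' f i (θ t ω) := by
      refine (mtsl_aux_condexp_pi_apply (𝓕.le t) (gt t) (hgt_int t) i).symm.trans ?_
      filter_upwards [hunbiased t ht] with ω hω
      exact congrFun hω i
    have hae : μ[XG|𝓕 t]
        =ᵐ[μ] fun ω => (θ t ω i - θs i) * pderiv' f i (θ t ω) := by
      refine hmul.trans ?_
      filter_upwards [hcomp] with ω hω
      simp only [Pi.mul_apply, hω]
    constructor
    · exact (integrable_condExp.congr hae)
    · calc ∫ ω, (θ t ω i - θs i) * gt t ω i ∂μ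
          = ∫ ω, (μ[XG|𝓕 t]) ω ∂μ := (integral_condExp (𝓕.le t)).symm
        _ = ∫ ω, (θ t ω i - θs i) * pderiv' f i (θ t ω) ∂μ := integral_congr_ae hae
  -- one-step inequality
  have key : ∀ t, t < T → D (t + 1) ≤ D t - 2 * ηmin t * F t + ηmax t ^ 2 * G ^ 2 := by
    intro t ht
    have hB : Integrable (fun ω => ∑ i, 2 * η t i * ((θ t ω i - θs i) * gt t ω i)) μ :=
      integrable_finset_sum _ fun i _ => ((hXg_int t i).const_mul _)
    have hC : Integrable (fun ω => ∑ i, (η t i) ^ 2 * (gt t ω i) ^ 2) μ :=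
      integrable_finset_sum _ fun i _ => ((hgsq_int t i).const_mul _)
    have hsplit : D (t + 1)
        = D t - (∫ ω, ∑ i, 2 * η t i * ((θ t ω i - θs i) * gt t ω i) ∂μ)
          + ∫ ω, ∑ i, (η t i) ^ 2 * (gt t ω i) ^ 2 ∂μ := by
      rw [hD]
      simp only
      have hle : ∀ ω, ∑ i, (θ (t + 1) ω i - θs i) ^ 2
          = ((∑ i, (θ t ω i - θs i) ^ 2) - ∑ i, 2 * η t i * ((θ t ω i - θs i) * gt t ω i))
            + ∑ i, (η t i) ^ 2 * (gt t ω i) ^ 2 := by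
        intro ω
        rw [hupdate t ω]
        rw [← Finset.sum_sub_distrib, ← Finset.sum_add_distrib]
        exact Finset.sum_congr rfl fun i _ => by ring
      calc ∫ ω, ∑ i, (θ (t + 1) ω i - θs i) ^ 2 ∂μ
          = ∫ ω, (((∑ i, (θ t ω i - θs i) ^ 2)
                - ∑ i, 2 * η t i * ((θ t ω i - θs i) * gt t ω i))
              + ∑ i, (η t i) ^ 2 * (gt t ω i) ^ 2) ∂μ :=
            integral_congr_ae (Filter.Eventually.of_forall fun ω => hle ω)
        _ = (∫ ω, ((∑ i, (θ t ω i - θs i) ^ 2)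
                - ∑ i, 2 * η t i * ((θ t ω i - θs i) * gt t ω i)) ∂μ)
              + ∫ ω, ∑ i, (η t i) ^ 2 * (gt t ω i) ^ 2 ∂μ := by
            exact integral_add ((hθint t).sub hB) hC
        _ = (∫ ω, ∑ i, (θ t ω i - θs i) ^ 2 ∂μ)
              - (∫ ω, ∑ i, 2 * η t i * ((θ t ω i - θs i) * gt t ω i) ∂μ)
              + ∫ ω, ∑ i, (η t i) ^ 2 * (gt t ω i) ^ 2 ∂μ := by
            rw [integral_sub (hθint t) hB]
    -- cross term lower bound
    have hDint : Integrable (fun ω => ∑ i, 2 * η t i * ((θ t ω i - θs i) * pderiv' f i (θ t ω))) μ :=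
      integrable_finset_sum _ fun i _ => (((hcross t ht i).1).const_mul _)
    have hcross_eq : (∫ ω, ∑ i, 2 * η t i * ((θ t ω i - θs i) * gt t ω i) ∂μ)
        = ∫ ω, ∑ i, 2 * η t i * ((θ t ω i - θs i) * pderiv' f i (θ t ω)) ∂μ := by
      rw [integral_finset_sum _ fun i _ => ((hXg_int t i).const_mul _),
        integral_finset_sum _ fun i _ => (((hcross t ht i).1).const_mul _)]
      refine Finset.sum_congr rfl fun i _ => ?_
      rw [integral_const_mul, integral_const_mul, (hcross t ht i).2]
    have hcross_ge : (∫ ω, ∑ i, 2 * η t i * ((θ t ω i - θs i) * pderiv' f i (θ t ω)) ∂μ)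
        ≥ 2 * ηmin t * F t := by
      rw [hF]; simp only
      rw [← integral_const_mul]
      refine integral_mono_ae ((hfs_int t).const_mul _) hDint ?_
      filter_upwards [halign t ht] with ω hω
      have h1 : ∀ i : Fin n, 2 * ηmin t * ((θ t ω i - θs i) * pderiv' f i (θ t ω))
          ≤ 2 * η t i * ((θ t ω i - θs i) * pderiv' f i (θ t ω)) := by
        intro i
        have hnn : 0 ≤ (θ t ω i - θs i) * pderiv' f i (θ t ω) := by
          have := hω i; linarith [hω i, mul_comm (pderiv' f i (θ t ω)) (θ t ω i - θs i)]
        nlinarith [hηmin_le t i, hnn]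
      have h2 : f (θ t ω) - f θs ≤ ∑ i, (θ t ω i - θs i) * pderiv' f i (θ t ω) := by
        have hgrad := mtsl_aux_grad_le hconv hdiff (θ t ω) θs
        have hsum : fderiv ℝ f (θ t ω) (θ t ω - θs)
            = ∑ i, (θ t ω i - θs i) * pderiv' f i (θ t ω) := by
          rw [mtsl_aux_clm_sum (fderiv ℝ f (θ t ω)) (θ t ω - θs)]
          exact Finset.sum_congr rfl fun i _ => rfl
        have hneg : fderiv ℝ f (θ t ω) (θs - θ t ω) = -fderiv ℝ f (θ t ω) (θ t ω - θs) := by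
          rw [show θs - θ t ω = -(θ t ω - θs) by abel, map_neg]
        rw [hneg] at hgrad
        linarith [hsum ▸ hgrad]
      calc 2 * ηmin t * (f (θ t ω) - f θs)
          ≤ 2 * ηmin t * ∑ i, (θ t ω i - θs i) * pderiv' f i (θ t ω) := by
            have := hηmin_pos t
            nlinarith [h2]
        _ = ∑ i, 2 * ηmin t * ((θ t ω i - θs i) * pderiv' f i (θ t ω)) := by
            rw [Finset.mul_sum]
        _ ≤ ∑ i, 2 * η t i * ((θ t ω i - θs i) * pderiv' f i (θ t ω)) :=
            Finset.sum_le_sum fun i _ => h1 i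
    -- quadratic term upper bound
    have hquad : (∫ ω, ∑ i, (η t i) ^ 2 * (gt t ω i) ^ 2 ∂μ) ≤ ηmax t ^ 2 * G ^ 2 := by
      have hstep : (∫ ω, ∑ i, (η t i) ^ 2 * (gt t ω i) ^ 2 ∂μ)
          ≤ ∫ ω, ηmax t ^ 2 * ∑ i, (gt t ω i) ^ 2 ∂μ := by
        refine integral_mono hC ((integrable_finset_sum _ fun i _ => hgsq_int t i).const_mul _) ?_
        intro ω
        dsimp only
        rw [Finset.mul_sum]
        refine Finset.sum_le_sum fun i _ => ?_
        have h1 : (η t i) ^ 2 ≤ ηmax t ^ 2 := by nlinarith [hη t i, hηmax_le t i]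
        nlinarith [sq_nonneg (gt t ω i)]
      rw [integral_const_mul] at hstep
      refine hstep.trans ?_
      have h2 : (0:ℝ) ≤ ηmax t ^ 2 := sq_nonneg _
      exact mul_le_mul_of_nonneg_left (hG t ht) h2
    rw [hsplit, hcross_eq]
    have := hcross_ge
    linarith [hquad, hcross_ge]
  -- telescoping
  have htel : ∀ N, N ≤ T →
      D N + ∑ t ∈ Finset.range N, 2 * ηmin t * F t
        ≤ D 0 + ∑ t ∈ Finset.range N, ηmax t ^ 2 * G ^ 2 := by
    intro N
    induction N with
    | zero => intro _; simp
    | succ N ih =>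
      intro hN
      have h1 := ih (by omega)
      have h2 := key N (by omega)
      rw [Finset.sum_range_succ, Finset.sum_range_succ]
      linarith
  have hDT : 0 ≤ D T := integral_nonneg fun ω => Finset.sum_nonneg fun i _ => sq_nonneg _
  have hD0 : D 0 = ∑ i, (θinit i - θs i) ^ 2 := by
    rw [hD]
    simp only [hθ0]
    rw [integral_const]
    simp
  have hmain : ∑ t ∈ Finset.range T, 2 * ηmin t * F t
      ≤ (∑ i, (θinit i - θs i) ^ 2) + G ^ 2 * ∑ t ∈ Finset.range T, ηmax t ^ 2 := by
    have := htel T le_rfl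
    rw [hD0] at this
    have heq : ∑ t ∈ Finset.range T, ηmax t ^ 2 * G ^ 2
        = G ^ 2 * ∑ t ∈ Finset.range T, ηmax t ^ 2 := by
      rw [Finset.mul_sum]; exact Finset.sum_congr rfl fun t _ => by ring
    linarith [this, heq ▸ this]
  -- conclude
  have hne : (Finset.range T).Nonempty := Finset.nonempty_range_iff.mpr (by omega)
  have hS_pos : 0 < ∑ t ∈ Finset.range T, ηmin t :=
    Finset.sum_pos (fun t _ => hηmin_pos t) hne
  rw [le_div_iff₀ (by linarith)]
  set M := (Finset.range T).inf' (Finset.nonempty_range_iff.mpr (by omega))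
      (fun t => ∫ ω, (f (θ t ω) - f θs) ∂μ) with hM
  have hM_le : ∀ t ∈ Finset.range T, M ≤ F t := fun t htm => Finset.inf'_le _ htm
  calc M * (2 * ∑ t ∈ Finset.range T, ηmin t)
      = ∑ t ∈ Finset.range T, 2 * ηmin t * M := by
        rw [Finset.mul_sum, Finset.mul_sum]
        exact Finset.sum_congr rfl fun t _ => by ring
    _ ≤ ∑ t ∈ Finset.range T, 2 * ηmin t * F t := by
        refine Finset.sum_le_sum fun t htm => ?_
        have := hηmin_pos t
        exact mul_le_mul_of_nonneg_left (hM_le t htm) (by linarith)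
    _ ≤ _ := hmain
end
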